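/- Let q₁, p₁, r₁, s₁, w₁ : ℝ → ℝ be differentiable functions satisfying the ODE system q₁' = 0, p₁' = (4/27)p₁(p₁s₁ + r₁w₁), r₁' = (4/27)r₁(p₁s₁ + r₁w₁), s₁' = −(4/27)s₁(p₁s₁ + r₁w₁), w₁' = −(4/27)w₁(p₁s₁ + r₁w₁). Then q₁, the product p₁s₁, and the product r₁w₁ are each constant in t. Consequently the peakon position is stationary. -/
import Mathlib


/-- along any solution of the N = 1 peakon system with H = 0, the position
q₁ and the products p₁s₁ and r₁w₁ are constants of motion. -/
theorem peakon_H0_invariants (q₁ p₁ r₁ s₁ w₁ : ℝ → ℝ)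
    (hq : Differentiable ℝ q₁) (hp : Differentiable ℝ p₁) (hr : Differentiable ℝ r₁)
    (hs : Differentiable ℝ s₁) (hw : Differentiable ℝ w₁)
    (heq : ∀ t : ℝ,
      deriv q₁ t = 0 ∧
      deriv p₁ t = (4 / 27) * p₁ t * (p₁ t * s₁ t + r₁ t * w₁ t) ∧
      deriv r₁ t = (4 / 27) * r₁ t * (p₁ t * s₁ t + r₁ t * w₁ t) ∧
      deriv s₁ t = -(4 / 27) * s₁ t * (p₁ t * s₁ t + r₁ t * w₁ t) ∧
      deriv w₁ t = -(4 / 27) * w₁ t * (p₁ t * s₁ t + r₁ t * w₁ t)) :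
    ∀ t : ℝ,
      q₁ t = q₁ 0 ∧ p₁ t * s₁ t = p₁ 0 * s₁ 0 ∧ r₁ t * w₁ t = r₁ 0 * w₁ 0 := by
  intro t
  have hqc : ∀ x, q₁ x = q₁ 0 := by
    intro x
    exact is_const_of_deriv_eq_zero hq (fun y => (heq y).1) x 0
  have hpsc : ∀ x, p₁ x * s₁ x = p₁ 0 * s₁ 0 := by
    intro x
    refine is_const_of_deriv_eq_zero (hp.mul hs) ?_ x 0
    intro y
    rw [deriv_mul (hp y) (hs y), (heq y).2.1, (heq y).2.2.2.1]
    ring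
  have hrwc : ∀ x, r₁ x * w₁ x = r₁ 0 * w₁ 0 := by
    intro x
    refine is_const_of_deriv_eq_zero (hr.mul hw) ?_ x 0
    intro y
    rw [deriv_mul (hr y) (hw y), (heq y).2.2.1, (heq y).2.2.2.2]
    ring
  exact ⟨hqc t, hpsc t, hrwc t⟩
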